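/- Let ≺ be a reflection order on Φ⁺ (Φ⁺ = {β₁ ≺ ⋯ ≺ β_N}) and define ≺' on Φ⁺ by α ≺' β iff −w₀α ≺ −w₀β; then ≺' is again a reflection order, whose i-th element is −w₀β_i. For all u, v ∈ W and 0 ≤ n ≤ N, the map sending a path u = w₁ →^{(α₁,m₁)} ⋯ →^{(α_ℓ,m_ℓ)} w_{ℓ+1} = v to the path w₀w₁w₀ →^{(−w₀α₁,m₁)} ⋯ →^{(−w₀α_ℓ,m_ℓ)} w₀w_{ℓ+1}w₀ is a well-defined bijection from Paths^≺_{≤n}(u ⇒ v) onto Paths^{≺'}_{≤n}(w₀uw₀ ⇒ w₀vw₀); it preserves lengths of paths and sends a path of weight ω to a path of weight −w₀ω. -/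

import Mathlib

noncomputable section

open Module

variable {V : Type} [AddCommGroup V] [Module ℝ V] [DecidableEq V]

/-- A finite crystallographic root system in `V`, together with a choice of positive roots. -/
structure RootSystemData (V : Type) [AddCommGroup V] [Module ℝ V] where
  /-- the (finite) set of roots -/
  Φ : Finset V
  /-- the set of positive roots -/
  pos : Finset V
  /-- the coroot `α∨`, viewed as a linear functional on `V` (only its values on `Φ` matter) -/
  coroot : V → Module.Dual ℝ V
  /-- the integer-valued pairing `⟨α∨, β⟩` (crystallographic condition) -/
  pairing : V → V → ℤ
  /-- the reflection `s_α` (only its values for `α ∈ Φ` matter) -/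
  s : V → V ≃ₗ[ℝ] V
  span_eq : Submodule.span ℝ (Φ : Set V) = ⊤
  ne_zero : ∀ α ∈ Φ, α ≠ (0 : V)
  neg_mem : ∀ α ∈ Φ, -α ∈ Φ
  coroot_self : ∀ α ∈ Φ, coroot α α = 2
  pairing_eq : ∀ α ∈ Φ, ∀ β ∈ Φ, (pairing α β : ℝ) = coroot α β
  s_apply : ∀ α ∈ Φ, ∀ v : V, s α v = v - coroot α v • α
  s_root_mem : ∀ α ∈ Φ, ∀ β ∈ Φ, s α β ∈ Φ
  pos_subset : pos ⊆ Φ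
  mem_pos_or : ∀ α ∈ Φ, α ∈ pos ∨ -α ∈ pos
  pos_not_neg : ∀ α ∈ pos, -α ∉ pos
  pos_add_mem : ∀ α ∈ pos, ∀ β ∈ pos, α + β ∈ Φ → α + β ∈ pos

namespace RootSystemData

variable (R : RootSystemData V)

/-- The Weyl group `W`, realized as a subgroup of the linear automorphisms of `V`,
generated by the reflections in the roots. -/
def Wgrp : Subgroup (V ≃ₗ[ℝ] V) := Subgroup.closure ((fun α => R.s α) '' (R.Φ : Set V))

/-- The length function `ℓ(w) = #{α ∈ Φ⁺ : w α ∈ Φ⁻}`. -/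
def len (w : V ≃ₗ[ℝ] V) : ℕ := (R.pos.filter fun α => -(w α) ∈ R.pos).card

/-- `⟨α∨, 2ρ⟩ = Σ_{β ∈ Φ⁺} ⟨α∨, β⟩` (an integer). -/
def pairSum (α : V) : ℤ := ∑ β ∈ R.pos, R.pairing α β

/-- The affine reflection `r_b` (for `b = (γ, ν) ∈ Φ_af`) applied to an affine root `c = (α, k)`:
`r_b (α, k) = (s_γ α, k − ν ⟨γ∨, α⟩)`. -/
def afRefl (b c : V × ℤ) : V × ℤ := (R.s b.1 c.1, c.2 - b.2 * R.pairing b.1 c.1)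

/-- Positivity of an affine root `(α, n)`: either `α ∈ Φ⁺` and `n ≥ 0`, or `α ∈ Φ⁻` and `n ≥ 1`. -/
def AfPos (c : V × ℤ) : Prop := (c.1 ∈ R.pos ∧ 0 ≤ c.2) ∨ (-c.1 ∈ R.pos ∧ 1 ≤ c.2)

/-- The affine reflection `r_b = s_γ t^{ν γ∨}` (for `b = (γ, ν)`), as an element of the
affine Weyl group realized as pairs `(w, μ) ∈ W × (coweights)` representing `w t^μ`. -/
def rE (b : V × ℤ) : (V ≃ₗ[ℝ] V) × Module.Dual ℝ V := (R.s b.1, (b.2 : ℝ) • R.coroot b.1)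

end RootSystemData

/-- Multiplication in the affine Weyl group `W̃ = W ⋉ Λ`, where `(w, μ)` represents `w t^μ`:
`(w t^μ)(w' t^{μ'}) = (w w') t^{w'⁻¹ μ + μ'}`, and the contragredient action on coweights is
`w'⁻¹ • μ = μ ∘ w'`. -/
def amul (x y : (V ≃ₗ[ℝ] V) × Module.Dual ℝ V) : (V ≃ₗ[ℝ] V) × Module.Dual ℝ V :=
  (x.1 * y.1, x.2 ∘ₗ y.1.toLinearMap + y.2)

/-- The ordered product `x₁ x₂ ⋯ x_k` in the affine Weyl group. -/
def aprod (l : List ((V ≃ₗ[ℝ] V) × Module.Dual ℝ V)) : (V ≃ₗ[ℝ] V) × Module.Dual ℝ V :=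
  l.foldr amul (1, 0)

namespace RootSystemData

variable (R : RootSystemData V)

/-- Given affine roots `b 0, …, b (K-1)`, this is `r_{b_{K-1}} ⋯ r_{b_{h+1}} r_{b_h} (b h)`
(apply the reflections with indices `≥ h` in ascending order of application). -/
def twist {K : ℕ} (b : Fin K → V × ℤ) (h : Fin K) : V × ℤ :=
  (((List.finRange K).filter fun j => h ≤ j).foldl (fun c j => R.afRefl (b j) c) (b h))

/-- Given affine roots `b 0, …, b (K-1)`, this is `r_{b_{K-1}} ⋯ r_{b_{h+1}} (b h)`
(apply the reflections with indices `> h` in ascending order of application). -/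
def twistStrict {K : ℕ} (b : Fin K → V × ℤ) (h : Fin K) : V × ℤ :=
  (((List.finRange K).filter fun j => h < j).foldl (fun c j => R.afRefl (b j) c) (b h))

end RootSystemData

/-- A reflection order on `Φ⁺`, given by an enumeration `β 0 ≺ β 1 ≺ ⋯ ≺ β (N-1)` of the
positive roots such that whenever `β i + β j = β k` one has `i < k < j` or `j < k < i`. -/
structure ReflectionOrder (R : RootSystemData V) (N : ℕ) where
  β : Fin N → V
  inj : Function.Injective β
  range_eq : Set.range β = (R.pos : Set V)
  order3 : ∀ i j k : Fin N, β i + β j = β k → (i < k ∧ k < j) ∨ (j < k ∧ k < i)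

/-- An increasing labelled path in the double Bruhat graph `DBG(W)` from `u` to `v`:
a sequence of edges `u = u₁ → u₂ → ⋯ → u_{ℓ+1} = v`, whose labels are positive roots
`lab (ix 1), …, lab (ix ℓ)` with `ix` strictly monotone (so the path is increasing for the
order given by the enumeration `lab`) and all indices lying in the allowed set `S`;
the edge from `u_i` carries an integer `m i ≥ 0`, with `m i ≥ 1` if `u_i (α_i) ∈ Φ⁻`. -/
structure IncPath (R : RootSystemData V) {N : ℕ} (lab : Fin N → V) (S : Set (Fin N))
    (u v : V ≃ₗ[ℝ] V) where
  len : ℕ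
  ix : Fin len → Fin N
  mono : StrictMono ix
  mem_S : ∀ i, ix i ∈ S
  m : Fin len → ℤ
  vert : Fin (len + 1) → V ≃ₗ[ℝ] V
  vert_zero : vert 0 = u
  vert_last : vert (Fin.last len) = v
  lab_mem : ∀ i : Fin len, lab (ix i) ∈ R.pos
  step : ∀ i : Fin len, vert i.succ = vert i.castSucc * R.s (lab (ix i))
  m_lb : ∀ i : Fin len, (if vert i.castSucc (lab (ix i)) ∈ R.pos then (0 : ℤ) else 1) ≤ m i

/-- The weight `wt(p) = m₁ α₁∨ + ⋯ + m_ℓ α_ℓ∨` of a path, as a coweight. -/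
def IncPath.wt {R : RootSystemData V} {N : ℕ} {lab : Fin N → V} {S : Set (Fin N)}
    {u v : V ≃ₗ[ℝ] V} (p : IncPath R lab S u v) : Module.Dual ℝ V :=
  ∑ i : Fin p.len, (p.m i : ℝ) • R.coroot (lab (p.ix i))

/-- A path in the quantum Bruhat graph `QBG(W)` from `u` to `v`: every edge is either an
edge `w →^{(α,0)} w s_α` with `ℓ(w s_α) = ℓ(w) + 1`, or an edge `w →^{(α,1)} w s_α` with
`ℓ(w s_α) = ℓ(w) + 1 − ⟨α∨, 2ρ⟩`. -/
structure QPath (R : RootSystemData V) (u v : V ≃ₗ[ℝ] V) where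
  len : ℕ
  lab : Fin len → V
  lab_mem : ∀ i, lab i ∈ R.pos
  m : Fin len → ℤ
  vert : Fin (len + 1) → V ≃ₗ[ℝ] V
  vert_zero : vert 0 = u
  vert_last : vert (Fin.last len) = v
  step : ∀ i : Fin len, vert i.succ = vert i.castSucc * R.s (lab i)
  edge : ∀ i : Fin len,
    (m i = 0 ∧ R.len (vert i.succ) = R.len (vert i.castSucc) + 1) ∨
    (m i = 1 ∧ (R.len (vert i.succ) : ℤ) = (R.len (vert i.castSucc) : ℤ) + 1 - R.pairSum (lab i))

/-- The weight of a path in the quantum Bruhat graph. -/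
def QPath.wt {R : RootSystemData V} {u v : V ≃ₗ[ℝ] V} (q : QPath R u v) : Module.Dual ℝ V :=
  ∑ i : Fin q.len, (q.m i : ℝ) • R.coroot (q.lab i)

/-- A simple root: a positive root that is not the sum of two positive roots. -/
def IsSimpleRoot (R : RootSystemData V) (α : V) : Prop :=
  α ∈ R.pos ∧ ¬ ∃ β ∈ R.pos, ∃ γ ∈ R.pos, α = β + γ

/-- `l` is a reduced word for `w`: a list of simple roots whose reflections multiply to `w`,
of length `ℓ(w)`. -/
def IsReducedWord (R : RootSystemData V) (l : List V) (w : V ≃ₗ[ℝ] V) : Prop :=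
  (∀ a ∈ l, IsSimpleRoot R a) ∧ (l.map R.s).prod = w ∧ l.length = R.len w

/-- Bruhat order: `x ≤ y` iff some reduced word for `y` contains a subword which is a
reduced word for `x`. -/
def BruhatLE (R : RootSystemData V) (x y : V ≃ₗ[ℝ] V) : Prop :=
  ∃ ly : List V, IsReducedWord R ly y ∧ ∃ lx : List V, lx.Sublist ly ∧ IsReducedWord R lx x

/-- An admissible type for `(x, u, ≺)`, bounded by `n`: indices `n₁ < ⋯ < n_K ≤ n` and
integers `ν₁, …, ν_K` such that, with `b_h = (u β_{n_h}, ν_h)`, each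
`r_{b_K} ⋯ r_{b_{h+1}} (b_h)` is a negative affine root and `r_{b₁} ⋯ r_{b_K} = x` in `W̃`. -/
structure AdmissibleType (R : RootSystemData V) {N : ℕ} (RO : ReflectionOrder R N) (n : ℕ)
    (u : V ≃ₗ[ℝ] V) (x : (V ≃ₗ[ℝ] V) × Module.Dual ℝ V) where
  K : ℕ
  idx : Fin K → Fin N
  mono : StrictMono idx
  bounded : ∀ h, (idx h : ℕ) < n
  ν : Fin K → ℤ
  neg_cond : ∀ h : Fin K, ¬ R.AfPos (R.twistStrict (fun j => (u (RO.β (idx j)), ν j)) h)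
  prod_eq : aprod (List.ofFn fun h : Fin K => R.rE (u (RO.β (idx h)), ν h)) = x



namespace RootSystemData
variable {V : Type} [AddCommGroup V] [Module ℝ V] [DecidableEq V] (R : RootSystemData V)
set_option linter.unusedSectionVars false
set_option linter.dupNamespace false
set_option maxHeartbeats 1000000

lemma smul_cancel' {a b : ℝ} {x : V} (hx : x ≠ 0) (h : a • x = b • x) : a = b := by
  by_contra hne
  have h2 : (a - b) • x = 0 := by rw [sub_smul, h, sub_self]
  rcases smul_eq_zero.mp h2 with h3 | h3
  · exact hne (by linarith [sub_eq_zero.mp (by exact_mod_cast h3)])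
  · exact hx h3

lemma s_s {α : V} (hα : α ∈ R.Φ) (v : V) : R.s α (R.s α v) = v := by
  rw [R.s_apply α hα v, R.s_apply α hα]
  have h2 : R.coroot α α = 2 := R.coroot_self α hα
  simp only [map_sub, map_smul, h2, smul_eq_mul]
  module

lemma s_mul_self {α : V} (hα : α ∈ R.Φ) : R.s α * R.s α = 1 :=
  LinearEquiv.toLinearMap_injective (LinearMap.ext fun v => R.s_s hα v)

lemma s_inv {α : V} (hα : α ∈ R.Φ) : (R.s α)⁻¹ = R.s α :=
  inv_eq_of_mul_eq_one_right (R.s_mul_self hα)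

lemma s_mem_W {α : V} (hα : α ∈ R.Φ) : R.s α ∈ R.Wgrp :=
  Subgroup.subset_closure ⟨α, hα, rfl⟩

lemma w_maps' {w : V ≃ₗ[ℝ] V} (hw : w ∈ R.Wgrp) :
    (∀ γ ∈ R.Φ, w γ ∈ R.Φ) ∧ (∀ γ ∈ R.Φ, w⁻¹ γ ∈ R.Φ) := by
  induction hw using Subgroup.closure_induction with
  | mem x hx =>
      obtain ⟨α, hα, rfl⟩ := hx
      constructor
      · exact fun γ hγ => R.s_root_mem α hα γ hγ
      · show ∀ γ ∈ R.Φ, (R.s α)⁻¹ γ ∈ R.Φ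
        rw [R.s_inv hα]; exact fun γ hγ => R.s_root_mem α hα γ hγ
  | one => exact ⟨fun γ hγ => hγ, fun γ hγ => by simpa using hγ⟩
  | mul x y hx hy ihx ihy =>
      refine ⟨fun γ hγ => ?_, fun γ hγ => ?_⟩
      · show x (y γ) ∈ R.Φ
        exact ihx.1 _ (ihy.1 _ hγ)
      · rw [mul_inv_rev]
        show y⁻¹ (x⁻¹ γ) ∈ R.Φ
        exact ihy.2 _ (ihx.2 _ hγ)
  | inv x hx ihx => exact ⟨ihx.2, by simpa using ihx.1⟩

lemma w_maps {w : V ≃ₗ[ℝ] V} (hw : w ∈ R.Wgrp) {γ : V} (hγ : γ ∈ R.Φ) : w γ ∈ R.Φ :=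
  (R.w_maps' hw).1 γ hγ

lemma pow_maps (g : V ≃ₗ[ℝ] V) (hg : ∀ γ ∈ R.Φ, g γ ∈ R.Φ) (n : ℕ) :
    ∀ γ ∈ R.Φ, (g ^ n) γ ∈ R.Φ := by
  induction n with
  | zero => intro γ hγ; simpa using hγ
  | succ n ih =>
      intro γ hγ
      rw [pow_succ g n]
      show (g ^ n) (g γ) ∈ R.Φ
      exact ih _ (hg _ hγ)

lemma exists_pow_eq_one (g : V ≃ₗ[ℝ] V) (hg : ∀ γ ∈ R.Φ, g γ ∈ R.Φ) :
    ∃ n, 0 < n ∧ g ^ n = 1 := by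
  classical
  obtain ⟨a, b, hab, h⟩ := Finite.exists_ne_map_eq_of_infinite
    (fun n : ℕ => (fun x : ↥R.Φ => (⟨(g ^ n) x.1, R.pow_maps g hg n x.1 x.2⟩ : ↥R.Φ)))
  wlog hlt : a < b generalizing a b
  · exact this b a hab.symm h.symm (by omega)
  have key : ∀ γ ∈ R.Φ, (g ^ (b - a)) γ = γ := by
    intro γ hγ
    have h1 : (g ^ a) γ = (g ^ b) γ := by
      have := congrFun h ⟨γ, hγ⟩
      exact congrArg Subtype.val this
    have h2 : g ^ b = g ^ a * g ^ (b - a) := by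
      rw [← pow_add]; congr 1; omega
    rw [h2] at h1
    exact ((g ^ a).injective h1).symm
  refine ⟨b - a, by omega, ?_⟩
  apply LinearEquiv.toLinearMap_injective
  apply LinearMap.ext_on R.span_eq
  intro x hx
  simpa using key x hx

lemma unip_eq_one (t : V ≃ₗ[ℝ] V) (κ : V) (hκ : t κ = κ)
    (hline : ∀ v, ∃ c : ℝ, t v = v + c • κ)
    (hfin : ∃ n, 0 < n ∧ t ^ n = 1) : ∀ v, t v = v := by
  obtain ⟨n, hn, htn⟩ := hfin
  intro v
  obtain ⟨c, hc⟩ := hline v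
  have hiter : ∀ m : ℕ, (t ^ m) v = v + (m : ℝ) • (c • κ) := by
    intro m
    induction m with
    | zero => simp
    | succ m ih =>
        rw [pow_succ' t m]
        show t ((t ^ m) v) = _
        rw [ih, map_add, hc, map_smul, map_smul, hκ]
        push_cast
        rw [add_smul, one_smul]
        abel
  have h0 : v = v + (n : ℝ) • (c • κ) := by
    have := hiter n
    rw [htn] at this
    simpa using this
  have hz : (n : ℝ) • (c • κ) = 0 := by
    have := h0.symm
    rwa [add_eq_left] at this
  have hck : c • κ = 0 := by
    rcases smul_eq_zero.mp hz with h | h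
    · exact absurd (by exact_mod_cast h : (n : ℕ) = 0) (by omega)
    · exact h
  rw [hc, hck, add_zero]

lemma refl_unique (f g : V ≃ₗ[ℝ] V) {γ : V} (hγΦ : γ ∈ R.Φ)
    (hfΦ : ∀ δ ∈ R.Φ, f δ ∈ R.Φ) (hgΦ : ∀ δ ∈ R.Φ, g δ ∈ R.Φ)
    (hfl : ∀ v, ∃ c : ℝ, f v = v + c • γ) (hgl : ∀ v, ∃ c : ℝ, g v = v + c • γ)
    (hfγ : f γ = -γ) (hgγ : g γ = -γ) (hg2 : g * g = 1) : f = g := by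
  set t := f * g with ht
  have htγ : t γ = γ := by
    show f (g γ) = γ
    rw [hgγ, map_neg, hfγ, neg_neg]
  have htl : ∀ v, ∃ c : ℝ, t v = v + c • γ := by
    intro v
    obtain ⟨c1, hc1⟩ := hgl v
    obtain ⟨c2, hc2⟩ := hfl (g v)
    refine ⟨c1 + c2, ?_⟩
    show f (g v) = _
    rw [hc2, hc1, add_smul]
    abel
  have htΦ : ∀ δ ∈ R.Φ, t δ ∈ R.Φ := fun δ hδ => hfΦ _ (hgΦ _ hδ)
  have h1 : ∀ v, t v = v :=
    unip_eq_one t γ htγ htl (R.exists_pow_eq_one t htΦ)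
  have ht1 : f * g = 1 :=
    LinearEquiv.toLinearMap_injective (LinearMap.ext fun v => h1 v)
  have hfg : f = g⁻¹ := eq_inv_of_mul_eq_one_left ht1
  rw [hfg, inv_eq_of_mul_eq_one_right hg2]

lemma s_neg {γ : V} (hγΦ : γ ∈ R.Φ) : R.s (-γ) = R.s γ := by
  have hnγ : -γ ∈ R.Φ := R.neg_mem γ hγΦ
  apply R.refl_unique _ _ hγΦ
  · exact fun δ hδ => R.s_root_mem _ hnγ δ hδ
  · exact fun δ hδ => R.s_root_mem _ hγΦ δ hδ
  · intro v
    refine ⟨R.coroot (-γ) v, ?_⟩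
    rw [R.s_apply _ hnγ v, smul_neg]
    abel
  · intro v
    exact ⟨-(R.coroot γ v), by rw [R.s_apply _ hγΦ v, neg_smul]; abel⟩
  · have h2' : R.coroot (-γ) γ = -2 := by
      have h2 : R.coroot (-γ) (-γ) = 2 := R.coroot_self _ hnγ
      rw [map_neg] at h2
      linarith
    rw [R.s_apply _ hnγ γ, h2']
    module
  · rw [R.s_apply _ hγΦ γ, R.coroot_self _ hγΦ]
    module
  · exact R.s_mul_self hγΦ

lemma coroot_neg_apply {γ : V} (hγΦ : γ ∈ R.Φ) (v : V) :
    R.coroot (-γ) v = -(R.coroot γ v) := by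
  have hnγ : -γ ∈ R.Φ := R.neg_mem γ hγΦ
  have h : R.s (-γ) v = R.s γ v := by rw [R.s_neg hγΦ]
  rw [R.s_apply _ hnγ v, R.s_apply _ hγΦ v, smul_neg, sub_neg_eq_add] at h
  have h2 : R.coroot (-γ) v • γ = (-(R.coroot γ v)) • γ := by
    rw [neg_smul]
    have := add_left_cancel (a := v) (by rw [h]; abel : v + R.coroot (-γ) v • γ = v + -(R.coroot γ v • γ))
    exact this
  exact smul_cancel' (R.ne_zero γ hγΦ) h2

lemma s_conj {w : V ≃ₗ[ℝ] V} (hw : w ∈ R.Wgrp) {γ : V} (hγΦ : γ ∈ R.Φ) :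
    R.s (w γ) = w * R.s γ * w⁻¹ := by
  have hwγ : w γ ∈ R.Φ := R.w_maps hw hγΦ
  have hwinv : ∀ δ ∈ R.Φ, w⁻¹ δ ∈ R.Φ := (R.w_maps' hw).2
  apply R.refl_unique _ _ hwγ
  · exact fun δ hδ => R.s_root_mem _ hwγ δ hδ
  · intro δ hδ
    show w (R.s γ (w.symm δ)) ∈ R.Φ
    exact R.w_maps hw (R.s_root_mem _ hγΦ _ (hwinv δ hδ))
  · intro v
    exact ⟨-(R.coroot (w γ) v), by rw [R.s_apply _ hwγ v, neg_smul]; abel⟩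
  · intro v
    refine ⟨-(R.coroot γ (w.symm v)), ?_⟩
    show w (R.s γ (w.symm v)) = _
    rw [R.s_apply _ hγΦ (w.symm v), map_sub, map_smul, neg_smul, w.apply_symm_apply]
    abel
  · rw [R.s_apply _ hwγ (w γ), R.coroot_self _ hwγ]
    module
  · show w (R.s γ (w.symm (w γ))) = -(w γ)
    rw [w.symm_apply_apply, R.s_apply _ hγΦ γ, R.coroot_self _ hγΦ, map_sub, map_smul]
    module
  · rw [show (w * R.s γ * w⁻¹) * (w * R.s γ * w⁻¹) = w * (R.s γ * R.s γ) * w⁻¹ by group,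
      R.s_mul_self hγΦ]
    group

lemma coroot_conj_apply {w : V ≃ₗ[ℝ] V} (hw : w ∈ R.Wgrp) {γ : V} (hγΦ : γ ∈ R.Φ) (v : V) :
    R.coroot (w γ) v = R.coroot γ (w.symm v) := by
  have hwγ : w γ ∈ R.Φ := R.w_maps hw hγΦ
  have h : R.s (w γ) v = w (R.s γ (w.symm v)) := by rw [R.s_conj hw hγΦ]; rfl
  rw [R.s_apply _ hwγ v, R.s_apply _ hγΦ (w.symm v), map_sub, map_smul,
    w.apply_symm_apply] at h
  have h2 : R.coroot (w γ) v • w γ = R.coroot γ (w.symm v) • w γ := by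
    exact sub_right_injective h
  exact smul_cancel' (R.ne_zero _ hwγ) h2

/-- The auxiliary positive semidefinite invariant form. -/
def BF (x y : V) : ℝ := ∑ δ ∈ R.Φ, R.coroot δ x * R.coroot δ y

lemma BF_symm (x y : V) : R.BF x y = R.BF y x := by
  unfold BF
  exact Finset.sum_congr rfl fun δ _ => mul_comm _ _

lemma BF_add_left (x y z : V) : R.BF (x + y) z = R.BF x z + R.BF y z := by
  unfold BF
  rw [← Finset.sum_add_distrib]
  exact Finset.sum_congr rfl fun δ _ => by rw [map_add, add_mul]

lemma BF_smul_left (c : ℝ) (x z : V) : R.BF (c • x) z = c * R.BF x z := by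
  unfold BF
  rw [Finset.mul_sum]
  exact Finset.sum_congr rfl fun δ _ => by rw [map_smul, smul_eq_mul, mul_assoc]

lemma BF_neg_left (x z : V) : R.BF (-x) z = -R.BF x z := by
  have := R.BF_smul_left (-1) x z
  simpa using this

lemma BF_sub_left (x y z : V) : R.BF (x - y) z = R.BF x z - R.BF y z := by
  rw [sub_eq_add_neg, R.BF_add_left, R.BF_neg_left, sub_eq_add_neg]

lemma BF_add_right (x y z : V) : R.BF x (y + z) = R.BF x y + R.BF x z := by
  rw [R.BF_symm, R.BF_add_left, R.BF_symm y x, R.BF_symm z x]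

lemma BF_smul_right (c : ℝ) (x z : V) : R.BF x (c • z) = c * R.BF x z := by
  rw [R.BF_symm, R.BF_smul_left, R.BF_symm z x]

lemma BF_zero_right (x : V) : R.BF x 0 = 0 := by
  have := R.BF_smul_right 0 x 0
  simpa using this

lemma BF_nonneg (x : V) : 0 ≤ R.BF x x :=
  Finset.sum_nonneg fun δ _ => mul_self_nonneg _

lemma BF_self_pos {γ : V} (hγ : γ ∈ R.Φ) : 0 < R.BF γ γ := by
  unfold BF
  have h := Finset.single_le_sum (f := fun δ => R.coroot δ γ * R.coroot δ γ)
    (fun δ _ => mul_self_nonneg _) hγ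
  simp only [R.coroot_self _ hγ] at h
  linarith

lemma coroot_conj_apply' {w : V ≃ₗ[ℝ] V} (hw : w ∈ R.Wgrp) {γ : V} (hγ : γ ∈ R.Φ) (v : V) :
    R.coroot (w.symm γ) v = R.coroot γ (w v) := by
  have h := R.coroot_conj_apply hw (show w.symm γ ∈ R.Φ from (R.w_maps' hw).2 γ hγ) (w v)
  rw [w.apply_symm_apply, w.symm_apply_apply] at h
  exact h.symm

lemma BF_invariant {w : V ≃ₗ[ℝ] V} (hw : w ∈ R.Wgrp) (x y : V) :
    R.BF (w x) (w y) = R.BF x y := by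
  unfold BF
  apply Finset.sum_bij (i := fun δ _ => w.symm δ)
  · intro δ hδ
    exact (R.w_maps' hw).2 δ hδ
  · intro a ha b hb h
    exact w.symm.injective h
  · intro b hb
    exact ⟨w b, R.w_maps hw hb, w.symm_apply_apply b⟩
  · intro δ hδ
    rw [R.coroot_conj_apply' hw hδ x, R.coroot_conj_apply' hw hδ y]

lemma coroot_BF {γ : V} (hγ : γ ∈ R.Φ) (x : V) :
    R.coroot γ x * R.BF γ γ = 2 * R.BF x γ := by
  have hinv := R.BF_invariant (R.s_mem_W hγ) x γ
  rw [R.s_apply _ hγ x, R.s_apply _ hγ γ, R.coroot_self _ hγ] at hinv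
  have hγγ : γ - (2 : ℝ) • γ = -γ := by module
  rw [hγγ] at hinv
  rw [R.BF_sub_left, R.BF_smul_left] at hinv
  have h1 : R.BF x (-γ) = -R.BF x γ := by rw [R.BF_symm, R.BF_neg_left, R.BF_symm]
  have h2 : R.BF γ (-γ) = -R.BF γ γ := by rw [R.BF_symm, R.BF_neg_left, R.BF_symm]
  rw [h1, h2] at hinv
  linarith

lemma BF_cs (x y : V) : 4 * R.BF x y ^ 2 ≤ 4 * (R.BF x x * R.BF y y) := by
  have key := discrim_le_zero (a := R.BF x x) (b := 2 * R.BF x y) (c := R.BF y y) ?_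
  · unfold discrim at key
    nlinarith [key]
  · intro t
    have h := R.BF_nonneg (t • x + y)
    simp only [R.BF_add_left, R.BF_add_right, R.BF_smul_left, R.BF_smul_right] at h
    rw [R.BF_symm y x] at h
    nlinarith [h]

/-- pairing product identity -/
lemma pairing_BF {γ δ : V} (hγ : γ ∈ R.Φ) (hδ : δ ∈ R.Φ) :
    (R.coroot γ δ) * (R.coroot δ γ) * (R.BF γ γ * R.BF δ δ) = 4 * R.BF γ δ ^ 2 := by
  have h1 := R.coroot_BF hγ δ
  have h2 := R.coroot_BF hδ γ
  have hs : R.BF δ γ = R.BF γ δ := R.BF_symm δ γ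
  have h3 : (R.coroot γ δ * R.BF γ γ) * (R.coroot δ γ * R.BF δ δ)
      = (2 * R.BF δ γ) * (2 * R.BF γ δ) := by rw [h1, h2]
  rw [hs] at h3
  linear_combination h3

/-- same-sign lemma -/
lemma coroot_neg_of_BF_neg {γ δ : V} (hγ : γ ∈ R.Φ) (hδ : δ ∈ R.Φ) (h : R.BF γ δ < 0) :
    R.coroot γ δ < 0 ∧ R.coroot δ γ < 0 := by
  have h1 := R.coroot_BF hγ δ
  have h2 := R.coroot_BF hδ γ
  have hs : R.BF δ γ = R.BF γ δ := R.BF_symm δ γ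
  have p1 := R.BF_self_pos hγ
  have p2 := R.BF_self_pos hδ
  constructor
  · nlinarith
  · nlinarith

/-- The key pair lemma: if `B(γ,δ) < 0` and `γ + δ ≠ 0`, then `γ + δ` is a root. -/
lemma pair_mem {γ δ : V} (hγ : γ ∈ R.Φ) (hδ : δ ∈ R.Φ) (hB : R.BF γ δ < 0)
    (hne : γ + δ ≠ 0) : γ + δ ∈ R.Φ := by
  obtain ⟨hc, hc'⟩ := R.coroot_neg_of_BF_neg hγ hδ hB
  -- integrality
  have hci : (R.pairing γ δ : ℝ) = R.coroot γ δ := R.pairing_eq γ hγ δ hδ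
  have hci' : (R.pairing δ γ : ℝ) = R.coroot δ γ := R.pairing_eq δ hδ γ hγ
  set a : ℤ := R.pairing γ δ with ha
  set b : ℤ := R.pairing δ γ with hb
  have haneg : a ≤ -1 := by
    have h0 : (a : ℝ) < 0 := by rw [hci]; exact hc
    have : a < 0 := by exact_mod_cast h0
    omega
  have hbneg : b ≤ -1 := by
    have h0 : (b : ℝ) < 0 := by rw [hci']; exact hc'
    have : b < 0 := by exact_mod_cast h0
    omega
  by_cases hA : a = -1
  · -- s γ δ = δ + γ
    have := R.s_root_mem γ hγ δ hδ
    rw [R.s_apply _ hγ δ, ← hci, hA] at this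
    norm_num at this
    rw [add_comm]
    exact this
  by_cases hB' : b = -1
  · have := R.s_root_mem δ hδ γ hγ
    rw [R.s_apply _ hδ γ, ← hci', hB'] at this
    norm_num at this
    exact this
  -- both ≤ -2
  have ha2 : a ≤ -2 := by omega
  have hb2 : b ≤ -2 := by omega
  -- CS forces a = b = -2
  have hprod : (a : ℝ) * b * (R.BF γ γ * R.BF δ δ) = 4 * R.BF γ δ ^ 2 := by
    rw [hci, hci']
    exact R.pairing_BF hγ hδ
  have hcs := R.BF_cs γ δ
  have p1 := R.BF_self_pos hγ
  have p2 := R.BF_self_pos hδ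
  have hBB := mul_pos p1 p2
  have hab4 : (a : ℝ) * b ≤ 4 := by
    by_contra hgt
    push_neg at hgt
    nlinarith [mul_pos (sub_pos.mpr hgt) hBB]
  have hab4' : 4 ≤ (a : ℝ) * b := by
    have : (4 : ℤ) ≤ a * b := by
      nlinarith [mul_nonneg (by linarith : (0:ℤ) ≤ -a-2) (by linarith : (0:ℤ) ≤ -b-2)]
    exact_mod_cast this
  have habe : (a : ℝ) * b = 4 := le_antisymm hab4 hab4'
  have habz : a * b = 4 := by exact_mod_cast habe
  have ha2' : a = -2 := by
    have ha3 : -3 < a := by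
      by_contra hle
      push_neg at hle
      nlinarith [mul_nonneg (by linarith : (0:ℤ) ≤ -a-3) (by linarith : (0:ℤ) ≤ -b-2)]
    omega
  have hb2' : b = -2 := by
    rw [ha2'] at habz
    omega
  -- now B γ δ = -B γ γ = -B δ δ
  have hBγδ1 : R.BF γ δ = -R.BF γ γ := by
    have h1 := R.coroot_BF hγ δ
    rw [← hci, ha2'] at h1
    have hs : R.BF δ γ = R.BF γ δ := R.BF_symm δ γ
    push_cast at h1
    linarith
  have hBγδ2 : R.BF γ δ = -R.BF δ δ := by
    have h2 := R.coroot_BF hδ γ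
    rw [← hci', hb2'] at h2
    have hs : R.BF δ γ = R.BF γ δ := R.BF_symm δ γ
    push_cast at h2
    linarith
  set κ := γ + δ with hκ
  have hκκ : R.BF κ κ = 0 := by
    rw [hκ, R.BF_add_left, R.BF_add_right, R.BF_add_right]
    have : R.BF δ γ = R.BF γ δ := R.BF_symm δ γ
    linarith
  -- all coroots vanish on κ
  have hcor : ∀ ε ∈ R.Φ, R.coroot ε κ = 0 := by
    intro ε hε
    have hsum : ∑ δ' ∈ R.Φ, R.coroot δ' κ * R.coroot δ' κ = 0 := hκκ
    have := (Finset.sum_eq_zero_iff_of_nonneg (fun δ' _ => mul_self_nonneg (R.coroot δ' κ))).mp hsum ε hε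
    nlinarith [this]
  -- coroot γ v = -coroot δ v
  have hBκ : ∀ v : V, R.BF v κ = 0 := by
    intro v
    unfold BF
    apply Finset.sum_eq_zero
    intro ε hε
    rw [hcor ε hε, mul_zero]
  have hBδδγγ : R.BF δ δ = R.BF γ γ := by linarith
  have hcorγδ : ∀ v : V, R.coroot γ v = -(R.coroot δ v) := by
    intro v
    have h1 := R.coroot_BF hγ v
    have h2 := R.coroot_BF hδ v
    have h3 : R.BF v γ = -R.BF v δ := by
      have := hBκ v
      rw [hκ, R.BF_add_right] at this
      linarith
    rw [hBδδγγ] at h2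
    rw [h3] at h1
    have := R.BF_self_pos hγ
    nlinarith [h1, h2]
  -- the transvection T = s γ * s δ
  have hcorδ2 : R.coroot γ δ = -2 := by rw [← hci, ha2']; norm_num
  have hTv : ∀ v, (R.s γ * R.s δ) v = v - R.coroot δ v • κ := by
    intro v
    show R.s γ (R.s δ v) = _
    rw [R.s_apply _ hδ v, R.s_apply _ hγ (v - R.coroot δ v • δ)]
    rw [map_sub, map_smul, hcorγδ v, hcorδ2, hκ]
    simp only [smul_eq_mul]
    module
  have hTκ : (R.s γ * R.s δ) κ = κ := by
    rw [hTv κ, hcor δ hδ]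
    module
  have hTΦ : ∀ ε ∈ R.Φ, (R.s γ * R.s δ) ε ∈ R.Φ := by
    intro ε hε
    show R.s γ (R.s δ ε) ∈ R.Φ
    exact R.s_root_mem _ hγ _ (R.s_root_mem _ hδ _ hε)
  have hTl : ∀ v, ∃ c : ℝ, (R.s γ * R.s δ) v = v + c • κ := by
    intro v
    exact ⟨-(R.coroot δ v), by rw [hTv v, neg_smul]; abel⟩
  have hT1 : ∀ v, (R.s γ * R.s δ) v = v :=
    unip_eq_one _ κ hTκ hTl (R.exists_pow_eq_one _ hTΦ)
  exfalso
  have hδ' := hT1 δ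
  rw [hTv δ, R.coroot_self _ hδ] at hδ'
  have hκ0 : (2 : ℝ) • κ = 0 := by
    have : δ - (2 : ℝ) • κ = δ := hδ'
    have h' := sub_eq_self.mp this
    exact h'
  have : κ = 0 := by
    rcases smul_eq_zero.mp hκ0 with h | h
    · norm_num at h
    · exact h
  exact hne this

lemma pair_mem_coroot {γ δ : V} (hγ : γ ∈ R.Φ) (hδ : δ ∈ R.Φ) (h : R.coroot γ δ < 0)
    (hne : γ + δ ≠ 0) : γ + δ ∈ R.Φ := by
  apply R.pair_mem hγ hδ ?_ hne
  have h1 := R.coroot_BF hγ δ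
  have p1 := R.BF_self_pos hγ
  have hs : R.BF δ γ = R.BF γ δ := R.BF_symm δ γ
  nlinarith

lemma string_mem {α δ : V} (hα : α ∈ R.Φ) (hδ : δ ∈ R.Φ) (hδα : ∀ t : ℝ, δ ≠ t • α)
    {k : ℕ} (hk : R.coroot α δ = -(k : ℝ)) : ∀ j : ℕ, j ≤ k → δ + (j : ℝ) • α ∈ R.Φ := by
  have hcor : ∀ j : ℕ, R.coroot α (δ + (j : ℝ) • α) = -(k : ℝ) + 2 * j := by
    intro j
    rw [map_add, map_smul, hk, R.coroot_self _ hα, smul_eq_mul]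
    ring
  have aux : ∀ j : ℕ, 2 * j ≤ k + 1 → δ + (j : ℝ) • α ∈ R.Φ := by
    intro j
    induction j with
    | zero => intro _; simpa using hδ
    | succ j ih =>
        intro hj
        have hmem : δ + (j : ℝ) • α ∈ R.Φ := ih (by omega)
        have hneg : R.coroot α (δ + (j : ℝ) • α) < 0 := by
          rw [hcor j]
          have : 2 * j + 2 ≤ k + 1 := hj
          have : (2 : ℝ) * j ≤ (k : ℝ) - 1 := by
            have h' : 2 * j + 1 ≤ k := by omega
            push_cast
            have := (Nat.cast_le (α := ℝ)).mpr h'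
            push_cast at this
            linarith
          linarith
        have hne : α + (δ + (j : ℝ) • α) ≠ 0 := by
          intro h0
          apply hδα (-(1 + (j : ℝ)))
          have h1 : δ - (-(1 + (j : ℝ))) • α = α + (δ + (j : ℝ) • α) := by module
          rw [h0] at h1
          exact sub_eq_zero.mp h1
        have := R.pair_mem_coroot hα hmem hneg hne
        have heq : α + (δ + (j : ℝ) • α) = δ + ((j + 1 : ℕ) : ℝ) • α := by
          push_cast
          module
        rwa [heq] at this
  intro j hj
  by_cases h2j : 2 * j ≤ k + 1
  · exact aux j h2j
  · have hm : 2 * (k - j) ≤ k + 1 := by omega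
    have hmem := aux (k - j) hm
    have himg := R.s_root_mem α hα _ hmem
    rw [R.s_apply _ hα, hcor (k - j)] at himg
    have hc : ((k - j : ℕ) : ℝ) = (k : ℝ) - (j : ℝ) := by
      have : (j : ℝ) ≤ (k : ℝ) := by exact_mod_cast hj
      push_cast [Nat.cast_sub hj]
      ring
    have heq : δ + ((k - j : ℕ) : ℝ) • α - (-(k : ℝ) + 2 * ((k - j : ℕ) : ℝ)) • α
        = δ + (j : ℝ) • α := by
      rw [hc]
      module
    rwa [heq] at himg

lemma pos_climb {α δ : V} (hα : α ∈ R.pos) (hδ : δ ∈ R.pos) (hδα : ∀ t : ℝ, δ ≠ t • α)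
    {k : ℕ} (hk : R.coroot α δ = -(k : ℝ)) : ∀ j : ℕ, j ≤ k → δ + (j : ℝ) • α ∈ R.pos := by
  have hαΦ : α ∈ R.Φ := R.pos_subset hα
  have hδΦ : δ ∈ R.Φ := R.pos_subset hδ
  intro j
  induction j with
  | zero => intro _; simpa using hδ
  | succ j ih =>
      intro hj
      have h1 : δ + (j : ℝ) • α ∈ R.pos := ih (by omega)
      have h2 : δ + ((j + 1 : ℕ) : ℝ) • α ∈ R.Φ := R.string_mem hαΦ hδΦ hδα hk _ hj
      have heq : δ + ((j + 1 : ℕ) : ℝ) • α = (δ + (j : ℝ) • α) + α := by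
        push_cast
        module
    
      rw [heq] at h2 ⊢
      exact R.pos_add_mem _ h1 _ hα h2

/-- eliminate the case of a positive root being a nonpositive multiple of a positive root -/
lemma mult_case {α δ : V} (hα : α ∈ R.pos) (hδ : δ ∈ R.pos) {t : ℝ} (hlin : δ = t • α)
    (ht : t ≤ 0) : False := by
  have hαΦ : α ∈ R.Φ := R.pos_subset hα
  have hδΦ : δ ∈ R.Φ := R.pos_subset hδ
  have hcαδ : R.coroot α δ = 2 * t := by
    rw [hlin, map_smul, R.coroot_self _ hαΦ, smul_eq_mul]; ring
  have ht0 : t ≠ 0 := by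
    intro h0
    rw [h0, zero_smul] at hlin
    exact R.ne_zero δ hδΦ hlin
  have htneg : t < 0 := lt_of_le_of_ne ht ht0
  have hcδα : R.coroot δ α = 2 / t := by
    have : α = t⁻¹ • δ := by rw [hlin, smul_smul, inv_mul_cancel₀ ht0, one_smul]
    rw [this, map_smul, R.coroot_self _ hδΦ, smul_eq_mul]
    field_simp
  set A := R.pairing α δ with hA
  set B := R.pairing δ α with hB
  have hAr : (A : ℝ) = 2 * t := by rw [hA, R.pairing_eq _ hαΦ _ hδΦ, hcαδ]
  have hBr : (B : ℝ) = 2 / t := by rw [hB, R.pairing_eq _ hδΦ _ hαΦ, hcδα]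
  have hABr : (A : ℝ) * B = 4 := by
    rw [hAr, hBr]
    field_simp
    ring
  have hAB : A * B = 4 := by exact_mod_cast hABr
  have hAneg : A < 0 := by
    have : (A : ℝ) < 0 := by rw [hAr]; nlinarith
    exact_mod_cast this
  have hBneg : B < 0 := by
    have : (B : ℝ) < 0 := by
      rw [hBr]
      exact div_neg_of_pos_of_neg (by norm_num) htneg
    exact_mod_cast this
  have hub : A ≤ -1 := by omega
  have hlb : -4 ≤ A := by
    have hdvd : (-A) ∣ 4 := (neg_dvd).mpr ⟨B, hAB.symm⟩
    have := Int.le_of_dvd (by norm_num) hdvd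
    linarith
  interval_cases A
  · -- A = -4, t = -2
    have hts : t = -2 := by
      norm_num at hAr
      linarith
    rw [hts] at hlin
    have hsum : α + α = -δ := by rw [hlin]; module
    have hsum_mem : α + α ∈ R.Φ := by rw [hsum]; exact R.neg_mem δ hδΦ
    have hsum_pos : α + α ∈ R.pos := R.pos_add_mem α hα α hα hsum_mem
    apply R.pos_not_neg _ hsum_pos
    have : -(α + α) = δ := by rw [hsum, neg_neg]
    rw [this]
    exact hδ
  · -- A = -3: impossible
    omega
  · -- A = -2, t = -1
    have hts : t = -1 := by
      norm_num at hAr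
      linarith
    rw [hts] at hlin
    apply R.pos_not_neg α hα
    have : δ = -α := by rw [hlin]; module
    rw [← this]
    exact hδ
  · -- A = -1, t = -1/2
    have hts : t = -(1/2) := by
      norm_num at hAr
      linarith
    rw [hts] at hlin
    have hsum : δ + δ = -α := by rw [hlin]; module
    have hsum_mem : δ + δ ∈ R.Φ := by rw [hsum]; exact R.neg_mem α hαΦ
    have hsum_pos : δ + δ ∈ R.pos := R.pos_add_mem δ hδ δ hδ hsum_mem
    apply R.pos_not_neg _ hsum_pos
    have : -(δ + δ) = α := by rw [hsum, neg_neg]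
    rw [this]
    exact hα

/-- If `⟨α∨,δ⟩ ≤ 0` for positive roots `α, δ`, then `s_α δ` is positive. -/
lemma s_pos_of_coroot_nonpos {α δ : V} (hα : α ∈ R.pos) (hδ : δ ∈ R.pos)
    (hnp : R.coroot α δ ≤ 0) : R.s α δ ∈ R.pos := by
  have hαΦ : α ∈ R.Φ := R.pos_subset hα
  have hδΦ : δ ∈ R.Φ := R.pos_subset hδ
  by_cases hlin : ∃ t : ℝ, δ = t • α
  · obtain ⟨t, ht⟩ := hlin
    have h2t : R.coroot α δ = 2 * t := by
      rw [ht, map_smul, R.coroot_self _ hαΦ, smul_eq_mul]; ring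
    have : t ≤ 0 := by rw [h2t] at hnp; linarith
    exact absurd (R.mult_case hα hδ ht this) (fun h => h)
  · push_neg at hlin
    set n := R.pairing α δ with hn
    have hnr : (n : ℝ) = R.coroot α δ := R.pairing_eq _ hαΦ _ hδΦ
    have hn0 : n ≤ 0 := by
      have : (n : ℝ) ≤ 0 := by rw [hnr]; exact hnp
      exact_mod_cast this
    set k := (-n).toNat with hkdef
    have hkr : R.coroot α δ = -(k : ℝ) := by
      rw [← hnr, hkdef]
      have : ((-n).toNat : ℤ) = -n := Int.toNat_of_nonneg (by omega)
      have h2 : ((-n).toNat : ℝ) = -(n : ℝ) := by exact_mod_cast this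
      rw [h2]
      ring
    have hclimb := R.pos_climb hα hδ hlin hkr k le_rfl
    have heq : R.s α δ = δ + (k : ℝ) • α := by
      rw [R.s_apply _ hαΦ δ, hkr]
      module
    rwa [heq]

/-- Simple reflections permute the positive roots other than multiples of the simple root. -/
lemma s_pos_of_simple {α δ : V} (hαs : IsSimpleRoot R α) (hδ : δ ∈ R.pos)
    (hδα : ∀ t : ℝ, δ ≠ t • α) : R.s α δ ∈ R.pos := by
  have hα : α ∈ R.pos := hαs.1
  have hαΦ : α ∈ R.Φ := R.pos_subset hα
  have hδΦ : δ ∈ R.Φ := R.pos_subset hδ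
  set n := R.pairing α δ with hn
  have hnr : (n : ℝ) = R.coroot α δ := R.pairing_eq _ hαΦ _ hδΦ
  by_cases hn0 : n ≤ 0
  · exact R.s_pos_of_coroot_nonpos hα hδ (by rw [← hnr]; exact_mod_cast hn0)
  · push_neg at hn0
    set k := n.toNat with hkdef
    have hknat : (k : ℤ) = n := Int.toNat_of_nonneg (by omega)
    have hkr : (k : ℝ) = (n : ℝ) := by exact_mod_cast hknat
    have hnegαΦ : -α ∈ R.Φ := R.neg_mem α hαΦ
    have hδnα : ∀ t : ℝ, δ ≠ t • (-α) := by
      intro t h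
      apply hδα (-t)
      rw [h]
      module
    have hkneg : R.coroot (-α) δ = -(k : ℝ) := by
      rw [R.coroot_neg_apply hαΦ δ, ← hnr, hkr]
    have hstring := R.string_mem hnegαΦ hδΦ hδnα hkneg
    -- descending chain stays positive
    have hclimb : ∀ j : ℕ, j ≤ k → δ + (j : ℝ) • (-α) ∈ R.pos := by
      intro j
      induction j with
      | zero => intro _; simpa using hδ
      | succ j ih =>
          intro hj
          have h1 : δ + (j : ℝ) • (-α) ∈ R.pos := ih (by omega)
          have h2 : δ + ((j + 1 : ℕ) : ℝ) • (-α) ∈ R.Φ := hstring _ hj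
          by_cases hp : δ + ((j + 1 : ℕ) : ℝ) • (-α) ∈ R.pos
          · exact hp
          · exfalso
            have hnegmem : -(δ + ((j + 1 : ℕ) : ℝ) • (-α)) ∈ R.pos := by
              rcases R.mem_pos_or _ h2 with h | h
              · exact absurd h hp
              · exact h
            apply hαs.2
            refine ⟨δ + (j : ℝ) • (-α), h1, -(δ + ((j + 1 : ℕ) : ℝ) • (-α)), hnegmem, ?_⟩
            push_cast
            module
    have hres := hclimb k le_rfl
    have heq : R.s α δ = δ + (k : ℝ) • (-α) := by
      rw [R.s_apply _ hαΦ δ, ← hnr, ← hkr]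
      module
    rwa [heq]

lemma BF_multiset_sum (x : V) (K : Multiset V) :
    R.BF x K.sum = (K.map (R.BF x)).sum := by
  induction K using Multiset.induction with
  | empty => simpa using R.BF_zero_right x
  | cons a K ih => simp [R.BF_add_right, ih]

lemma no_zero_multiset_sum_aux : ∀ n : ℕ, ∀ M : Multiset V, M.card = n →
    (∀ a ∈ M, a ∈ R.pos) → M.sum = 0 → M = 0 := by
  intro n
  induction n using Nat.strong_induction_on with
  | _ n ih =>
    intro M hcard hM h0
    rcases Multiset.empty_or_exists_mem M with h | ⟨β, hβ⟩
    · exact h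
    exfalso
    obtain ⟨M', rfl⟩ := Multiset.exists_cons_of_mem hβ
    have hβp : β ∈ R.pos := hM β (Multiset.mem_cons_self β M')
    have hβΦ : β ∈ R.Φ := R.pos_subset hβp
    have hsum0 : R.BF β β + R.BF β M'.sum = 0 := by
      have : R.BF β (β ::ₘ M').sum = 0 := by rw [h0]; exact R.BF_zero_right β
      rwa [Multiset.sum_cons, R.BF_add_right] at this
    have hneg : R.BF β M'.sum < 0 := by
      have := R.BF_self_pos hβΦ
      linarith
    have hex : ∃ δ ∈ M', R.BF β δ < 0 := by
      by_contra hc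
      push_neg at hc
      have : 0 ≤ R.BF β M'.sum := by
        rw [R.BF_multiset_sum]
        apply Multiset.sum_nonneg
        intro x hx
        obtain ⟨δ, hδ, rfl⟩ := Multiset.mem_map.mp hx
        exact hc δ hδ
      linarith
    obtain ⟨δ, hδM, hBδ⟩ := hex
    have hδp : δ ∈ R.pos := hM δ (Multiset.mem_cons_of_mem hδM)
    have hδΦ : δ ∈ R.Φ := R.pos_subset hδp
    obtain ⟨M'', rfl⟩ := Multiset.exists_cons_of_mem hδM
    by_cases hzero : β + δ = 0
    · have hd : δ = -β := eq_neg_of_add_eq_zero_right hzero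
      exact R.pos_not_neg β hβp (hd ▸ hδp)
    · have hκΦ : β + δ ∈ R.Φ := R.pair_mem hβΦ hδΦ hBδ hzero
      have hκpos : β + δ ∈ R.pos := R.pos_add_mem β hβp δ hδp hκΦ
      have hn2 : M''.card + 2 = n := by
        rw [← hcard]
        simp [Multiset.card_cons]
      have hMn := ih (M''.card + 1) (by omega) ((β + δ) ::ₘ M'') (by simp) ?_ ?_
      · exact Multiset.cons_ne_zero hMn
      · intro a ha
        rcases Multiset.mem_cons.mp ha with h | h
        · rw [h]; exact hκpos
        · exact hM a (Multiset.mem_cons_of_mem (Multiset.mem_cons_of_mem h))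
      · rw [Multiset.sum_cons]
        rw [Multiset.sum_cons, Multiset.sum_cons] at h0
        rw [← h0]
        abel

lemma no_zero_multiset_sum (M : Multiset V) (hM : ∀ a ∈ M, a ∈ R.pos) (h0 : M.sum = 0) :
    M = 0 :=
  R.no_zero_multiset_sum_aux M.card M rfl hM h0

/-- the auxiliary strict "decomposition" relation -/
def relLT (δ γ : V) : Prop :=
  ∃ M : Multiset V, M ≠ 0 ∧ (∀ a ∈ M, a ∈ R.pos) ∧ δ + M.sum = γ

lemma relLT_trans {a b c : V} (h1 : R.relLT a b) (h2 : R.relLT b c) : R.relLT a c := by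
  obtain ⟨M1, hM1, hM1p, hM1s⟩ := h1
  obtain ⟨M2, hM2, hM2p, hM2s⟩ := h2
  refine ⟨M1 + M2, by simp [hM1], ?_, ?_⟩
  · intro x hx
    rcases Multiset.mem_add.mp hx with h | h
    · exact hM1p x h
    · exact hM2p x h
  · rw [Multiset.sum_add, ← add_assoc, hM1s, hM2s]

lemma relLT_irrefl (γ : V) : ¬ R.relLT γ γ := by
  rintro ⟨M, hM, hMp, hMs⟩
  apply hM
  apply R.no_zero_multiset_sum M hMp
  have := hMs
  rwa [add_eq_left] at this

open Classical in
/-- measure for well-founded recursion on the decomposition relation -/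
noncomputable def mu (γ : V) : ℕ := (R.pos.filter (fun δ => R.relLT δ γ)).card

open Classical in
lemma mu_lt {δ γ : V} (hδ : δ ∈ R.pos) (h : R.relLT δ γ) : R.mu δ < R.mu γ := by
  apply Finset.card_lt_card
  constructor
  · intro x hx
    rw [Finset.mem_filter] at hx ⊢
    exact ⟨hx.1, R.relLT_trans hx.2 h⟩
  · intro hsub
    have hmem : δ ∈ R.pos.filter (fun d => R.relLT d γ) := Finset.mem_filter.mpr ⟨hδ, h⟩
    have := hsub hmem
    rw [Finset.mem_filter] at this
    exact R.relLT_irrefl δ this.2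

lemma exists_simple_decomp_aux : ∀ n : ℕ, ∀ γ ∈ R.pos, R.mu γ = n →
    ∃ M : Multiset V, M ≠ 0 ∧ (∀ a ∈ M, IsSimpleRoot R a) ∧ M.sum = γ := by
  intro n
  induction n using Nat.strong_induction_on with
  | _ n ih =>
    intro γ hγ hn
    by_cases hs : IsSimpleRoot R γ
    · exact ⟨{γ}, by simp, by simpa using hs, by simp⟩
    · have hdec : ∃ β ∈ R.pos, ∃ ε ∈ R.pos, γ = β + ε := by
        unfold IsSimpleRoot at hs
        push_neg at hs
        exact hs hγ
      obtain ⟨β, hβ, ε, hε, hγeq⟩ := hdec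
      have hrβ : R.relLT β γ := ⟨{ε}, by simp, by simpa using hε, by simpa using hγeq.symm⟩
      have hrε : R.relLT ε γ := ⟨{β}, by simp, by simpa using hβ, by
        simp only [Multiset.sum_singleton]
        rw [add_comm]
        exact hγeq.symm⟩
      obtain ⟨M1, h10, h1s, h1sum⟩ := ih (R.mu β) (hn ▸ R.mu_lt hβ hrβ) β hβ rfl
      obtain ⟨M2, h20, h2s, h2sum⟩ := ih (R.mu ε) (hn ▸ R.mu_lt hε hrε) ε hε rfl
      refine ⟨M1 + M2, by simp [h10], ?_, ?_⟩
      · intro a ha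
        rcases Multiset.mem_add.mp ha with h | h
        · exact h1s a h
        · exact h2s a h
      · rw [Multiset.sum_add, h1sum, h2sum, hγeq]

lemma exists_simple_decomp {γ : V} (hγ : γ ∈ R.pos) :
    ∃ M : Multiset V, M ≠ 0 ∧ (∀ a ∈ M, IsSimpleRoot R a) ∧ M.sum = γ :=
  R.exists_simple_decomp_aux (R.mu γ) γ hγ rfl

lemma s_apply_self {α : V} (hα : α ∈ R.Φ) : R.s α α = -α := by
  rw [R.s_apply _ hα, R.coroot_self _ hα]
  module

lemma coroot_s_apply {α : V} (hα : α ∈ R.Φ) (v : V) :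
    R.coroot α (R.s α v) = -(R.coroot α v) := by
  rw [R.s_apply _ hα, map_sub, map_smul, R.coroot_self _ hα, smul_eq_mul]
  ring

open Classical in
lemma coroot_simple_rho_pos {α : V} (hαs : IsSimpleRoot R α) :
    0 < R.coroot α (∑ δ ∈ R.pos, δ) := by
  have hα : α ∈ R.pos := hαs.1
  have hαΦ : α ∈ R.Φ := R.pos_subset hα
  rw [map_sum]
  rw [← Finset.sum_filter_add_sum_filter_not R.pos (fun δ => ∃ t : ℝ, δ = t • α)]
  have hB0 : ∑ δ ∈ R.pos.filter (fun δ => ¬∃ t : ℝ, δ = t • α), R.coroot α δ = 0 := by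
    apply Finset.sum_involution (g := fun δ _ => R.s α δ)
    · intro a ha
      rw [R.coroot_s_apply hαΦ a]
      ring
    · intro a ha hfa
      intro heq
      apply hfa
      have h1 : R.s α a = a := heq
      rw [R.s_apply _ hαΦ] at h1
      have h2 : R.coroot α a • α = 0 := by
        have := sub_eq_self.mp h1
        exact this
      rcases smul_eq_zero.mp h2 with h | h
      · exact h
      · exact absurd h (R.ne_zero α hαΦ)
    · intro a ha
      rw [Finset.mem_filter] at ha ⊢
      obtain ⟨hap, hanl⟩ := ha
      push_neg at hanl
      constructor
      · exact R.s_pos_of_simple hαs hap hanl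
      · rintro ⟨t, ht⟩
        apply hanl (-t)
        have : R.s α (R.s α a) = R.s α (t • α) := by rw [ht]
        rw [R.s_s hαΦ, map_smul, R.s_apply_self hαΦ] at this
        rw [this]
        module
    · intro a ha
      exact R.s_s hαΦ a
  rw [hB0, add_zero]
  apply Finset.sum_pos
  · intro δ hδ
    rw [Finset.mem_filter] at hδ
    obtain ⟨hδp, t, ht⟩ := hδ
    have htpos : 0 < t := by
      by_contra hle
      push_neg at hle
      exact R.mult_case hα hδp ht hle
    rw [ht, map_smul, R.coroot_self _ hαΦ, smul_eq_mul]
    linarith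
  · exact ⟨α, Finset.mem_filter.mpr ⟨hα, 1, by module⟩⟩

lemma BF_simple_rho_pos {α : V} (hαs : IsSimpleRoot R α) :
    0 < R.BF α (∑ δ ∈ R.pos, δ) := by
  have hαΦ : α ∈ R.Φ := R.pos_subset hαs.1
  have h1 := R.coroot_BF hαΦ (∑ δ ∈ R.pos, δ)
  have h2 := R.coroot_simple_rho_pos hαs
  have h3 := R.BF_self_pos hαΦ
  have hs : R.BF (∑ δ ∈ R.pos, δ) α = R.BF α (∑ δ ∈ R.pos, δ) := R.BF_symm _ _
  nlinarith

/-- the subgroup generated by the simple reflections -/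
def Ws : Subgroup (V ≃ₗ[ℝ] V) :=
  Subgroup.closure {g | ∃ a, IsSimpleRoot R a ∧ g = R.s a}

lemma s_mult_eq {α γ : V} (hα : α ∈ R.pos) (hγ : γ ∈ R.pos) {t : ℝ} (h : γ = t • α) :
    R.s γ = R.s α := by
  have hαΦ : α ∈ R.Φ := R.pos_subset hα
  have hγΦ : γ ∈ R.Φ := R.pos_subset hγ
  have htpos : 0 < t := by
    by_contra hle
    push_neg at hle
    exact R.mult_case hα hγ h hle
  have hcγα : R.coroot γ α = 2 / t := by
    have hα' : α = t⁻¹ • γ := by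
      rw [h, smul_smul, inv_mul_cancel₀ (ne_of_gt htpos), one_smul]
    rw [hα', map_smul, R.coroot_self _ hγΦ, smul_eq_mul]
    field_simp
  apply R.refl_unique _ _ hαΦ
  · exact fun δ hδ => R.s_root_mem _ hγΦ δ hδ
  · exact fun δ hδ => R.s_root_mem _ hαΦ δ hδ
  · intro v
    refine ⟨-(t * R.coroot γ v), ?_⟩
    rw [R.s_apply _ hγΦ v, h]
    module
  · intro v
    exact ⟨-(R.coroot α v), by rw [R.s_apply _ hαΦ v, neg_smul]; abel⟩
  · rw [R.s_apply _ hγΦ α, hcγα, h, smul_smul]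
    have : 2 / t * t = 2 := by field_simp
    rw [this]
    module
  · exact R.s_apply_self hαΦ
  · exact R.s_mul_self hαΦ

open Classical in
noncomputable def nu (γ : V) : ℕ :=
  (R.pos.filter (fun δ => R.BF δ (∑ d ∈ R.pos, d) < R.BF γ (∑ d ∈ R.pos, d))).card

open Classical in
lemma nu_lt {δ γ : V} (hδ : δ ∈ R.pos) (hγ : γ ∈ R.pos)
    (h : R.BF δ (∑ d ∈ R.pos, d) < R.BF γ (∑ d ∈ R.pos, d)) : R.nu δ < R.nu γ := by
  apply Finset.card_lt_card
  constructor
  · intro x hx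
    rw [Finset.mem_filter] at hx ⊢
    exact ⟨hx.1, lt_trans hx.2 h⟩
  · intro hsub
    have hmem : δ ∈ R.pos.filter
        (fun d => R.BF d (∑ d' ∈ R.pos, d') < R.BF γ (∑ d' ∈ R.pos, d')) :=
      Finset.mem_filter.mpr ⟨hδ, h⟩
    have := Finset.mem_filter.mp (hsub hmem)
    exact lt_irrefl _ this.2

lemma multiset_real_sum_nonpos (L : Multiset ℝ) (h : ∀ x ∈ L, x ≤ 0) : L.sum ≤ 0 := by
  induction L using Multiset.induction with
  | empty => simp
  | cons b K ih =>
      rw [Multiset.sum_cons]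
      have h1 : b ≤ 0 := h b (Multiset.mem_cons_self b K)
      have h2 : K.sum ≤ 0 := ih (fun x hx => h x (Multiset.mem_cons_of_mem hx))
      linarith

lemma multiset_sum_pos_exists {γ : V} (M : Multiset V) (h0 : 0 < R.BF γ M.sum) :
    ∃ a ∈ M, 0 < R.BF γ a := by
  by_contra hc
  push_neg at hc
  have : R.BF γ M.sum ≤ 0 := by
    rw [R.BF_multiset_sum]
    apply multiset_real_sum_nonpos
    intro x hx
    obtain ⟨a, ha, rfl⟩ := Multiset.mem_map.mp hx
    exact hc a ha
  linarith

lemma s_pos_mem_Ws_aux : ∀ n : ℕ, ∀ γ ∈ R.pos, R.nu γ = n → R.s γ ∈ R.Ws := by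
  intro n
  induction n using Nat.strong_induction_on with
  | _ n ih =>
    intro γ hγ hn
    have hγΦ : γ ∈ R.Φ := R.pos_subset hγ
    by_cases hml : ∃ a, IsSimpleRoot R a ∧ ∃ t : ℝ, γ = t • a
    · obtain ⟨a, has, t, ht⟩ := hml
      rw [R.s_mult_eq has.1 hγ ht]
      exact Subgroup.subset_closure ⟨a, has, rfl⟩
    · push_neg at hml
      obtain ⟨M, hM0, hMs, hMsum⟩ := R.exists_simple_decomp hγ
      have hBγγ : 0 < R.BF γ M.sum := by rw [hMsum]; exact R.BF_self_pos hγΦ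
      obtain ⟨a, haM, hBγa⟩ := R.multiset_sum_pos_exists M hBγγ
      have has : IsSimpleRoot R a := hMs a haM
      have haΦ : a ∈ R.Φ := R.pos_subset has.1
      have hcaγ : 0 < R.coroot a γ := by
        have h1 := R.coroot_BF haΦ γ
        have h2 := R.BF_self_pos haΦ
        have hs : R.BF γ a = R.BF a γ := R.BF_symm γ a
        nlinarith
      set γ' := R.s a γ with hγ'
      have hγ'pos : γ' ∈ R.pos := R.s_pos_of_simple has hγ (hml a has)
      have hBlt : R.BF γ' (∑ d ∈ R.pos, d) < R.BF γ (∑ d ∈ R.pos, d) := by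
        rw [hγ', R.s_apply _ haΦ, R.BF_sub_left, R.BF_smul_left]
        have := R.BF_simple_rho_pos has
        nlinarith
      have hmem : R.s γ' ∈ R.Ws := ih (R.nu γ') (hn ▸ R.nu_lt hγ'pos hγ hBlt) γ' hγ'pos rfl
      have hconj := R.s_conj (R.s_mem_W haΦ) hγΦ
      rw [R.s_inv haΦ] at hconj
      -- hconj : R.s (R.s a γ) = R.s a * R.s γ * R.s a
      have hkey : R.s γ = R.s a * R.s γ' * R.s a := by
        rw [hγ', hconj]
        rw [show R.s a * (R.s a * R.s γ * R.s a) * R.s a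
            = (R.s a * R.s a) * R.s γ * (R.s a * R.s a) by group]
        rw [R.s_mul_self haΦ, one_mul, mul_one]
      rw [hkey]
      have haWs : R.s a ∈ R.Ws := Subgroup.subset_closure ⟨a, has, rfl⟩
      exact mul_mem (mul_mem haWs hmem) haWs

lemma s_mem_Ws {γ : V} (hγ : γ ∈ R.Φ) : R.s γ ∈ R.Ws := by
  rcases R.mem_pos_or γ hγ with h | h
  · exact R.s_pos_mem_Ws_aux (R.nu γ) γ h rfl
  · rw [← R.s_neg hγ]
    exact R.s_pos_mem_Ws_aux (R.nu (-γ)) (-γ) h rfl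

lemma Wgrp_le_Ws : R.Wgrp ≤ R.Ws := by
  apply (Subgroup.closure_le _).mpr
  rintro g ⟨α, hα, rfl⟩
  exact R.s_mem_Ws hα

lemma exists_flip {P : ℕ → Prop} : ∀ L : ℕ, ¬ P 0 → P L → ∃ j < L, ¬ P j ∧ P (j + 1) := by
  intro L
  induction L with
  | zero => intro h0 hL; exact absurd hL h0
  | succ L ih =>
      intro h0 hL
      by_cases hPL : P L
      · obtain ⟨j, hj, h⟩ := ih h0 hPL
        exact ⟨j, by omega, h⟩
      · exact ⟨L, by omega, hPL, hL⟩

lemma list_of_mem_Ws {w : V ≃ₗ[ℝ] V} (hw : w ∈ R.Ws) :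
    ∃ l : List V, (∀ a ∈ l, IsSimpleRoot R a) ∧ (l.map R.s).prod = w := by
  induction hw using Subgroup.closure_induction with
  | mem x hx =>
      obtain ⟨a, ha, rfl⟩ := hx
      exact ⟨[a], by simpa using ha, by simp⟩
  | one => exact ⟨[], by simp, by simp⟩
  | mul x y hx hy ihx ihy =>
      obtain ⟨l1, h1s, h1p⟩ := ihx
      obtain ⟨l2, h2s, h2p⟩ := ihy
      refine ⟨l1 ++ l2, ?_, ?_⟩
      · intro a ha
        rcases List.mem_append.mp ha with h | h
        · exact h1s a h
        · exact h2s a h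
      · rw [List.map_append, List.prod_append, h1p, h2p]
  | inv x hx ihx =>
      obtain ⟨l, hs, hp⟩ := ihx
      refine ⟨l.reverse, fun a ha => hs a (List.mem_reverse.mp ha), ?_⟩
      rw [← hp, List.prod_inv_reverse, List.map_reverse, List.map_map]
      congr 2
      apply List.map_congr_left
      intro a ha
      show R.s a = (R.s a)⁻¹
      exact (R.s_inv (R.pos_subset (hs a ha).1)).symm

lemma prod_simples_mem_W (l : List V) (h : ∀ a ∈ l, a ∈ R.Φ) :
    (l.map R.s).prod ∈ R.Wgrp := by
  induction l with
  | nil => simp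
  | cons a t ih =>
      rw [List.map_cons, List.prod_cons]
      exact mul_mem (R.s_mem_W (h a List.mem_cons_self))
        (ih fun b hb => h b (List.mem_cons_of_mem a hb))

lemma eq_one_aux : ∀ n : ℕ, ∀ w : V ≃ₗ[ℝ] V, ∀ l : List V, l.length = n →
    (∀ a ∈ l, IsSimpleRoot R a) → (l.map R.s).prod = w →
    (∀ α ∈ R.pos, w α ∈ R.pos) → w = 1 := by
  intro n
  induction n using Nat.strong_induction_on with
  | _ n ih =>
    intro w l hlen hls hprod hp
    rcases List.eq_nil_or_concat l with rfl | ⟨l', b, rfl⟩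
    · exact hprod.symm
    · -- l = l' ++ [b]
      rw [List.concat_eq_append] at hlen hls hprod
      have hbs : IsSimpleRoot R b := hls b (by simp)
      have hbpos : b ∈ R.pos := hbs.1
      have hbΦ : b ∈ R.Φ := R.pos_subset hbpos
      have hl's : ∀ a ∈ l', IsSimpleRoot R a := fun a ha => hls a (by simp [ha])
      set w' := (l'.map R.s).prod with hw'
      have hw'W : w' ∈ R.Wgrp :=
        R.prod_simples_mem_W l' (fun a ha => R.pos_subset (hl's a ha).1)
      have hwsplit : w = w' * R.s b := by
        rw [← hprod, List.map_append, List.prod_append]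
        simp [hw']
      by_cases hw'b : w' b ∈ R.pos
      · exfalso
        have hwb : w b = -(w' b) := by
          rw [hwsplit]
          show w' (R.s b b) = _
          rw [R.s_apply_self hbΦ, map_neg]
        have := hp b hbpos
        rw [hwb] at this
        exact R.pos_not_neg _ hw'b this
      · -- find the flip
        set L := l'.length with hL
        set y : ℕ → V := fun j => ((l'.drop j).map R.s).prod b with hy
        have hyL : y L ∈ R.pos := by
          have : l'.drop L = [] := by rw [hL]; exact List.drop_length
          show ((l'.drop L).map R.s).prod b ∈ R.pos
          rw [this]
          simpa using hbpos
        have hy0 : ¬ y 0 ∈ R.pos := by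
          show ¬ ((l'.drop 0).map R.s).prod b ∈ R.pos
          simpa using hw'b
        obtain ⟨j, hjL, hyj, hyj1⟩ := exists_flip (P := fun j => y j ∈ R.pos) L hy0 hyL
        have hrel : y j = R.s l'[j] (y (j + 1)) := by
          show ((l'.drop j).map R.s).prod b = _
          rw [List.drop_eq_getElem_cons hjL, List.map_cons, List.prod_cons]
          rfl
        -- y (j+1) is in Wgrp-image of b: positive root
        have hdropW : ((l'.drop (j+1)).map R.s).prod ∈ R.Wgrp :=
          R.prod_simples_mem_W _ (fun a ha => R.pos_subset (hl's a (List.mem_of_mem_drop ha)).1)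
        have hyj1pos : y (j + 1) ∈ R.pos := hyj1
        have hαjs : IsSimpleRoot R l'[j] := hl's _ (List.getElem_mem hjL)
        -- y (j+1) must be a multiple of l'[j]
        have hmult : ∃ t : ℝ, y (j + 1) = t • l'[j] := by
          by_contra hc
          push_neg at hc
          have := R.s_pos_of_simple hαjs hyj1pos hc
          rw [← hrel] at this
          exact hyj this
        obtain ⟨t, ht⟩ := hmult
        have hseq : R.s (y (j + 1)) = R.s l'[j] := R.s_mult_eq hαjs.1 hyj1pos ht
        have hconj : R.s (y (j + 1)) =
            ((l'.drop (j+1)).map R.s).prod * R.s b * (((l'.drop (j+1)).map R.s).prod)⁻¹ := by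
          exact R.s_conj hdropW hbΦ
        -- now produce shorter word
        set A := ((l'.take j).map R.s).prod with hA
        set B' := ((l'.drop (j+1)).map R.s).prod with hB'
        have hsplit' : w' = A * (R.s l'[j] * B') := by
          rw [hw']
          conv_lhs => rw [← List.take_append_drop j l']
          rw [List.map_append, List.prod_append]
          rw [List.drop_eq_getElem_cons hjL, List.map_cons, List.prod_cons]
        have hkey : R.s l'[j] * B' * R.s b = B' := by
          rw [← hseq, hconj]
          rw [show B' * R.s b * B'⁻¹ * B' * R.s b = B' * (R.s b * R.s b) by group]
          rw [R.s_mul_self hbΦ, mul_one]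
        have hw2 : w = A * B' := by
          rw [hwsplit, hsplit']
          rw [show A * (R.s l'[j] * B') * R.s b = A * (R.s l'[j] * B' * R.s b) by group]
          rw [hkey]
        have hlist2 : ((l'.take j ++ l'.drop (j+1)).map R.s).prod = w := by
          rw [List.map_append, List.prod_append, ← hA, ← hB', hw2]
        have hlen2 : (l'.take j ++ l'.drop (j+1)).length = n - 2 := by
          rw [List.length_append, List.length_take, List.length_drop]
          have hn : n = l'.length + 1 := by
            rw [← hlen]
            simp
          omega
        have hsimp2 : ∀ a ∈ l'.take j ++ l'.drop (j+1), IsSimpleRoot R a := by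
          intro a ha
          rcases List.mem_append.mp ha with h | h
          · exact hl's a (List.mem_of_mem_take h)
          · exact hl's a (List.mem_of_mem_drop h)
        have hn2 : n - 2 < n := by
          have hn : n = l'.length + 1 := by rw [← hlen]; simp
          omega
        exact ih (n - 2) hn2 w _ hlen2 hsimp2 hlist2 hp

lemma eq_one_of_pos_stable (w : V ≃ₗ[ℝ] V) (hw : w ∈ R.Wgrp)
    (hp : ∀ α ∈ R.pos, w α ∈ R.pos) : w = 1 := by
  obtain ⟨l, hls, hprod⟩ := R.list_of_mem_Ws (R.Wgrp_le_Ws hw)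
  exact R.eq_one_aux l.length w l rfl hls hprod hp

variable {w0 : V ≃ₗ[ℝ] V}

lemma w0_sq (hw0W : w0 ∈ R.Wgrp) (hw0 : ∀ α ∈ R.pos, -(w0 α) ∈ R.pos) : w0 * w0 = 1 := by
  apply R.eq_one_of_pos_stable _ (mul_mem hw0W hw0W)
  intro α hα
  show w0 (w0 α) ∈ R.pos
  have h2 : -(w0 (-(w0 α))) ∈ R.pos := hw0 _ (hw0 α hα)
  rw [map_neg, neg_neg] at h2
  exact h2

lemma w0_w0_apply (hsq : w0 * w0 = 1) (x : V) : w0 (w0 x) = x := by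
  have : (w0 * w0) x = (1 : V ≃ₗ[ℝ] V) x := by rw [hsq]
  exact this

lemma w0_neg_pos_iff (hw0 : ∀ α ∈ R.pos, -(w0 α) ∈ R.pos) {γ : V} (hγ : γ ∈ R.Φ) :
    -(w0 γ) ∈ R.pos ↔ γ ∈ R.pos := by
  constructor
  · intro h
    by_contra hγp
    have hneg : -γ ∈ R.pos := (R.mem_pos_or γ hγ).resolve_left hγp
    have h2 := hw0 _ hneg
    rw [map_neg, neg_neg] at h2
    exact R.pos_not_neg _ h2 h
  · exact hw0 γ

lemma w0_conj_s (hw0W : w0 ∈ R.Wgrp) (hw0 : ∀ α ∈ R.pos, -(w0 α) ∈ R.pos) {α : V}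
    (hα : α ∈ R.pos) : R.s (-(w0 α)) = w0 * R.s α * w0 := by
  have hαΦ : α ∈ R.Φ := R.pos_subset hα
  rw [R.s_neg (R.w_maps hw0W hαΦ), R.s_conj hw0W hαΦ,
    inv_eq_of_mul_eq_one_right (R.w0_sq hw0W hw0)]

lemma coroot_neg_w0_apply (hw0W : w0 ∈ R.Wgrp) {β : V} (hβΦ : β ∈ R.Φ) (x : V) :
    R.coroot (-(w0 β)) x = -(R.coroot β ((w0⁻¹ : V ≃ₗ[ℝ] V) x)) := by
  rw [R.coroot_neg_apply (R.w_maps hw0W hβΦ) x, R.coroot_conj_apply hw0W hβΦ x]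
  rfl

lemma path_vert_mem {N : ℕ} {lab : Fin N → V} {S : Set (Fin N)} {u v : V ≃ₗ[ℝ] V}
    (hu : u ∈ R.Wgrp) (p : IncPath R lab S u v) (j : Fin (p.len + 1)) : p.vert j ∈ R.Wgrp := by
  induction j using Fin.induction with
  | zero => rw [p.vert_zero]; exact hu
  | succ i ih =>
      rw [p.step i]
      exact mul_mem ih (R.s_mem_W (R.pos_subset (p.lab_mem i)))

/-- conjugation of an increasing path by `w0`. -/
def conjPath (hw0W : w0 ∈ R.Wgrp) (hw0 : ∀ α ∈ R.pos, -(w0 α) ∈ R.pos)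
    {N : ℕ} {lab1 lab2 : Fin N → V} (hrel : ∀ i, lab2 i = -(w0 (lab1 i)))
    {S : Set (Fin N)} {u v u' v' : V ≃ₗ[ℝ] V} (hu : u ∈ R.Wgrp)
    (hu' : u' = w0 * u * w0) (hv' : v' = w0 * v * w0)
    (p : IncPath R lab1 S u v) : IncPath R lab2 S u' v' where
  len := p.len
  ix := p.ix
  mono := p.mono
  mem_S := p.mem_S
  m := p.m
  vert := fun j => w0 * p.vert j * w0
  vert_zero := by show w0 * p.vert 0 * w0 = u'; rw [p.vert_zero, hu']
  vert_last := by show w0 * p.vert (Fin.last p.len) * w0 = v'; rw [p.vert_last, hv']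
  lab_mem := fun i => by rw [hrel]; exact hw0 _ (p.lab_mem i)
  step := by
    intro i
    show w0 * p.vert i.succ * w0 = (w0 * p.vert i.castSucc * w0) * R.s (lab2 (p.ix i))
    rw [hrel, R.w0_conj_s hw0W hw0 (p.lab_mem i), p.step i]
    rw [show (w0 * p.vert i.castSucc * w0) * (w0 * R.s (lab1 (p.ix i)) * w0)
        = w0 * p.vert i.castSucc * (w0 * w0) * R.s (lab1 (p.ix i)) * w0 by group,
      R.w0_sq hw0W hw0]
    group
  m_lb := by
    intro i
    show (if (w0 * p.vert i.castSucc * w0) (lab2 (p.ix i)) ∈ R.pos then (0:ℤ) else 1) ≤ p.m i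
    have hβpos := p.lab_mem i
    have hβΦ : lab1 (p.ix i) ∈ R.Φ := R.pos_subset hβpos
    have hvW : p.vert i.castSucc ∈ R.Wgrp := R.path_vert_mem hu p i.castSucc
    have happ : (w0 * p.vert i.castSucc * w0) (lab2 (p.ix i))
        = -(w0 (p.vert i.castSucc (lab1 (p.ix i)))) := by
      rw [hrel]
      show w0 (p.vert i.castSucc (w0 (-(w0 (lab1 (p.ix i)))))) = _
      rw [map_neg, w0_w0_apply (R.w0_sq hw0W hw0), map_neg, map_neg]
    have hcond : ((w0 * p.vert i.castSucc * w0) (lab2 (p.ix i)) ∈ R.pos)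
        ↔ (p.vert i.castSucc (lab1 (p.ix i)) ∈ R.pos) := by
      rw [happ]
      exact R.w0_neg_pos_iff hw0 (R.w_maps hvW hβΦ)
    rw [if_congr hcond rfl rfl]
    exact p.m_lb i

lemma incpath_ext {N : ℕ} {lab : Fin N → V} {S : Set (Fin N)} {u v : V ≃ₗ[ℝ] V}
    {p q : IncPath R lab S u v} (h1 : p.len = q.len) (h2 : HEq p.ix q.ix)
    (h3 : HEq p.m q.m) (h4 : HEq p.vert q.vert) : p = q := by
  obtain ⟨l1, ix1, mo1, ms1, m1, vt1, vz1, vl1, lm1, st1, mb1⟩ := p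
  obtain ⟨l2, ix2, mo2, ms2, m2, vt2, vz2, vl2, lm2, st2, mb2⟩ := q
  dsimp at h1 h2 h3 h4
  subst h1
  rw [heq_iff_eq] at h2 h3 h4
  subst h2
  subst h3
  subst h4
  rfl

lemma w0_image (hw0 : ∀ α ∈ R.pos, -(w0 α) ∈ R.pos) :
    R.pos.image (fun a => -(w0 a)) = R.pos := by
  have hinj : Function.Injective (fun a : V => -(w0 a)) :=
    fun a b h => w0.injective (neg_injective h)
  apply Finset.eq_of_subset_of_card_le
  · intro x hx
    obtain ⟨a, ha, rfl⟩ := Finset.mem_image.mp hx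
    exact hw0 a ha
  · exact le_of_eq (Finset.card_image_of_injective _ hinj).symm

end RootSystemData


/-- `α ≺' β :⟺ −w₀α ≺ −w₀β` defines a reflection order with `i`-th element
`−w₀ β_i`, and conjugation by `w₀` together with relabelling by `−w₀` gives a bijection
`Paths^≺_{≤n}(u ⇒ v) ≃ Paths^{≺'}_{≤n}(w₀uw₀ ⇒ w₀vw₀)` preserving lengths and sending
weight `ω` to `−w₀ω`. -/
theorem statement6 (R : RootSystemData V) {N : ℕ} (RO : ReflectionOrder R N)
    (n : ℕ) (hn : n ≤ N) (u v : V ≃ₗ[ℝ] V) (hu : u ∈ R.Wgrp) (hv : v ∈ R.Wgrp)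
    (w0 : V ≃ₗ[ℝ] V) (hw0W : w0 ∈ R.Wgrp) (hw0 : ∀ α ∈ R.pos, -(w0 α) ∈ R.pos) :
    (∃ RO' : ReflectionOrder R N, RO'.β = fun i => -(w0 (RO.β i)))
    ∧ ∃ e : IncPath R RO.β {j : Fin N | (j : ℕ) < n} u v ≃
          IncPath R (fun i : Fin N => -(w0 (RO.β i))) {j : Fin N | (j : ℕ) < n}
            (w0 * u * w0) (w0 * v * w0),
        ∀ p : IncPath R RO.β {j : Fin N | (j : ℕ) < n} u v,
          ∃ h : (e p).len = p.len,
            (∀ i, (e p).ix i = p.ix (Fin.cast h i)) ∧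
            (∀ i, (e p).m i = p.m (Fin.cast h i)) ∧
            (∀ j : Fin ((e p).len + 1),
              (e p).vert j = w0 * p.vert (Fin.cast (by omega) j) * w0) ∧
            IncPath.wt (e p) = -(IncPath.wt p ∘ₗ ((w0⁻¹ : V ≃ₗ[ℝ] V)).toLinearMap) := by
  have hsq : w0 * w0 = 1 := R.w0_sq hw0W hw0
  constructor
  · refine ⟨⟨fun i => -(w0 (RO.β i)), ?_, ?_, ?_⟩, rfl⟩
    · intro i j h
      exact RO.inj (w0.injective (neg_injective h))
    · have h1 : Set.range (fun i => -(w0 (RO.β i)))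
          = (fun a => -(w0 a)) '' Set.range RO.β := by
        rw [← Set.range_comp]
        rfl
      rw [h1, RO.range_eq, ← Finset.coe_image, R.w0_image hw0]
    · intro i j k h
      apply RO.order3
      apply w0.injective
      apply neg_injective
      rw [map_add, neg_add]
      exact h
  · have hrel21 : ∀ i : Fin N, RO.β i = -(w0 ((fun i => -(w0 (RO.β i))) i)) := by
      intro i
      show RO.β i = -(w0 (-(w0 (RO.β i))))
      rw [map_neg, neg_neg, RootSystemData.w0_w0_apply hsq]
    have huW' : w0 * u * w0 ∈ R.Wgrp := mul_mem (mul_mem hw0W hu) hw0W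
    have hu2 : u = w0 * (w0 * u * w0) * w0 := by
      rw [show w0 * (w0 * u * w0) * w0 = (w0 * w0) * u * (w0 * w0) by group, hsq,
        one_mul, mul_one]
    have hv2 : v = w0 * (w0 * v * w0) * w0 := by
      rw [show w0 * (w0 * v * w0) * w0 = (w0 * w0) * v * (w0 * w0) by group, hsq,
        one_mul, mul_one]
    refine ⟨{ toFun := R.conjPath hw0W hw0 (fun i => rfl) hu rfl rfl,
              invFun := R.conjPath hw0W hw0 hrel21 huW' hu2 hv2,
              left_inv := ?_, right_inv := ?_ }, ?_⟩
    · intro p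
      refine R.incpath_ext ?_ ?_ ?_ ?_
      · rfl
      · exact HEq.rfl
      · exact HEq.rfl
      · apply heq_of_eq
        funext j
        show w0 * (w0 * p.vert j * w0) * w0 = p.vert j
        rw [show w0 * (w0 * p.vert j * w0) * w0 = (w0 * w0) * p.vert j * (w0 * w0) by group,
          hsq, one_mul, mul_one]
    · intro q
      refine R.incpath_ext ?_ ?_ ?_ ?_
      · rfl
      · exact HEq.rfl
      · exact HEq.rfl
      · apply heq_of_eq
        funext j
        show w0 * (w0 * q.vert j * w0) * w0 = q.vert j
        rw [show w0 * (w0 * q.vert j * w0) * w0 = (w0 * w0) * q.vert j * (w0 * w0) by group,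
          hsq, one_mul, mul_one]
    · intro p
      refine ⟨rfl, fun i => rfl, fun i => rfl, fun j => rfl, ?_⟩
      show IncPath.wt (R.conjPath hw0W hw0 (fun i => rfl) hu rfl rfl p)
          = -(IncPath.wt p ∘ₗ ((w0⁻¹ : V ≃ₗ[ℝ] V)).toLinearMap)
      apply LinearMap.ext
      intro x
      rw [IncPath.wt, IncPath.wt]
      simp only [LinearMap.neg_apply, LinearMap.comp_apply, LinearMap.coe_sum,
        Finset.sum_apply, LinearMap.smul_apply, smul_eq_mul]
      rw [← Finset.sum_neg_distrib]
      refine Finset.sum_congr rfl fun i _ => ?_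
      have hc := R.coroot_neg_w0_apply hw0W (R.pos_subset (p.lab_mem i)) x
      show (p.m i : ℝ) * R.coroot (-(w0 (RO.β (p.ix i)))) x = _
      rw [hc]
      show _ = -((p.m i : ℝ) * R.coroot (RO.β (p.ix i)) ((w0⁻¹ : V ≃ₗ[ℝ] V).toLinearMap x))
      have : ((w0⁻¹ : V ≃ₗ[ℝ] V).toLinearMap x) = (w0⁻¹ : V ≃ₗ[ℝ] V) x := rfl
      rw [this]
      ring

end
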